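/- Norm preservation of the rotation iterator: let H be a real inner product space and let a, b, c ∈ H be unit vectors (‖a‖ = ‖b‖ = ‖c‖ = 1). Set u = ⟨b, c⟩, v = ⟨b, a⟩ and w = ⟨c, a⟩, and assume w ≠ −1. Then the vector r = ((u + 2uw − v)/(1 + w)) • a + b − ((u + v)/(1 + w)) • c satisfies ‖r‖ = 1. -/

import Mathlib

/-- Norm preservation of the rotation iterator: for unit vectors `a, b, c` in a real
inner product space, with `u = ⟨b, c⟩`, `v = ⟨b, a⟩`, `w = ⟨c, a⟩` and `w ≠ -1`, the
vector `r = ((u + 2uw - v)/(1 + w)) • a + b - ((u + v)/(1 + w)) • c` has norm one. -/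
theorem rotation_iterator_norm_preservation
    {H : Type*} [NormedAddCommGroup H] [InnerProductSpace ℝ H]
    (a b c : H) (ha : ‖a‖ = 1) (hb : ‖b‖ = 1) (hc : ‖c‖ = 1)
    (u v w : ℝ) (hu : u = inner ℝ b c) (hv : v = inner ℝ b a) (hw : w = inner ℝ c a)
    (hw1 : w ≠ -1) :
    ‖((u + 2 * u * w - v) / (1 + w)) • a + b - ((u + v) / (1 + w)) • c‖ = 1 := by
  have hs : (1 : ℝ) + w ≠ 0 := by
    intro h; apply hw1; linarith
  set r := ((u + 2 * u * w - v) / (1 + w)) • a + b - ((u + v) / (1 + w)) • c with hr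
  have haa : (inner ℝ a a : ℝ) = 1 := by
    rw [real_inner_self_eq_norm_sq, ha]; norm_num
  have hbb : (inner ℝ b b : ℝ) = 1 := by
    rw [real_inner_self_eq_norm_sq, hb]; norm_num
  have hcc : (inner ℝ c c : ℝ) = 1 := by
    rw [real_inner_self_eq_norm_sq, hc]; norm_num
  have hcb : (inner ℝ c b : ℝ) = u := by rw [real_inner_comm, ← hu]
  have hab : (inner ℝ a b : ℝ) = v := by rw [real_inner_comm, ← hv]
  have hac : (inner ℝ a c : ℝ) = w := by rw [real_inner_comm, ← hw]
  have key : (inner ℝ r r : ℝ) = 1 := by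
    rw [hr]
    simp only [inner_sub_left, inner_sub_right, inner_add_left, inner_add_right,
      inner_smul_left, inner_smul_right, RCLike.conj_to_real, haa, hbb, hcc, hcb, hab, hac,
      ← hu, ← hv, ← hw]
    field_simp
    ring
  have hnorm : ‖r‖ ^ 2 = 1 := by
    rw [← real_inner_self_eq_norm_sq, key]
  have := norm_nonneg r
  nlinarith [hnorm]
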